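/- arXiv:2307.03271 — 3 statements merged into one kernel-verified Lean document; each statement's English description precedes it below -/
import Mathlib

section
/- Let $d=1$, $p\in(1,\infty)$, $c(k)\ge 0$ with $c(k)=0$ for $k\le 0$, and $A(k)=1/k$ for $k\ge 1$. If the operator $\mathcal{H}f(x)=\sum_{k=1}^{\infty}c(k)f(x/k)$ is bounded on $L^p(\mathbb{R})$, then $\sum_{k=1}^{\infty}c(k)k^{1/p}\le\|\mathcal{H}\|$; in particular the condition $N_p(c,A)<\infty$ is necessary for boundedness in this case. -/
open MeasureTheory

section Aux

/-- Membership in `L^p` of the basic test function `x ^ (-(1/p))` on `Ioo a b`. -/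
lemma hausdorff_memLp_phi (p a b : ℝ) (hp : 1 < p) (ha : 0 < a) (hab : a < b) :
    MemLp (fun x : ℝ => (((Set.Ioo a b).indicator (fun y : ℝ => y ^ (-(1/p))) x : ℝ) : ℂ))
      (ENNReal.ofReal p) volume := by
  have hb : 0 < b := ha.trans hab
  have hmeas : Measurable fun x : ℝ =>
      (((Set.Ioo a b).indicator (fun y : ℝ => y ^ (-(1/p))) x : ℝ) : ℂ) :=
    Complex.measurable_ofReal.comp ((by measurability : Measurable fun y : ℝ => y ^ (-(1/p))).indicator measurableSet_Ioo)
  have hconst : MemLp ((Set.Ioo a b).indicator (fun _ : ℝ => (a ^ (-(1/p)) : ℝ)))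
      (ENNReal.ofReal p) volume := by
    refine memLp_indicator_const _ measurableSet_Ioo _ (Or.inr ?_)
    rw [Real.volume_Ioo]
    exact ENNReal.ofReal_ne_top
  refine MemLp.of_le hconst hmeas.aestronglyMeasurable (Filter.Eventually.of_forall fun x => ?_)
  by_cases hx : x ∈ Set.Ioo a b
  · rw [Set.indicator_of_mem hx, Set.indicator_of_mem hx]
    have hx0 : 0 < x := ha.trans hx.1
    rw [Complex.norm_real, Real.norm_eq_abs, Real.norm_eq_abs,
      abs_of_nonneg (Real.rpow_nonneg hx0.le _), abs_of_nonneg (Real.rpow_nonneg ha.le _)]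
    exact Real.rpow_le_rpow_of_nonpos ha hx.1.le (neg_nonpos.mpr (by positivity))
  · rw [Set.indicator_of_notMem hx, Set.indicator_of_notMem hx]
    simp

/-- The `L^p` norm of the basic test function. -/
lemma hausdorff_eLpNorm_phi (p a b : ℝ) (hp : 1 < p) (ha : 0 < a) (hab : a < b) :
    eLpNorm (fun x : ℝ => (((Set.Ioo a b).indicator (fun y : ℝ => y ^ (-(1/p))) x : ℝ) : ℂ))
      (ENNReal.ofReal p) volume
      = ENNReal.ofReal ((Real.log b - Real.log a) ^ ((1:ℝ)/p)) := by
  have hp0 : (0:ℝ) < p := by linarith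
  have hb : 0 < b := ha.trans hab
  have hq0 : (ENNReal.ofReal p) ≠ 0 := by
    simp [ENNReal.ofReal_eq_zero, not_le, hp0]
  have hqt : (ENNReal.ofReal p) ≠ ⊤ := ENNReal.ofReal_ne_top
  rw [(hausdorff_memLp_phi p a b hp ha hab).eLpNorm_eq_integral_rpow_norm hq0 hqt]
  have hptr : (ENNReal.ofReal p).toReal = p := ENNReal.toReal_ofReal hp0.le
  rw [hptr]
  have hfun : (fun x : ℝ =>
      ‖(((Set.Ioo a b).indicator (fun y : ℝ => y ^ (-(1/p))) x : ℝ) : ℂ)‖ ^ p)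
      = (Set.Ioo a b).indicator (fun y : ℝ => y⁻¹) := by
    funext x
    by_cases hx : x ∈ Set.Ioo a b
    · rw [Set.indicator_of_mem hx, Set.indicator_of_mem hx]
      have hx0 : 0 < x := ha.trans hx.1
      rw [Complex.norm_real, Real.norm_eq_abs, abs_of_nonneg (Real.rpow_nonneg hx0.le _),
        ← Real.rpow_mul hx0.le]
      have : (-(1/p)) * p = -1 := by field_simp
      rw [this, Real.rpow_neg_one]
    · rw [Set.indicator_of_notMem hx, Set.indicator_of_notMem hx]
      simp [Real.zero_rpow (ne_of_gt hp0)]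
  rw [hfun, integral_indicator measurableSet_Ioo]
  have hint : ∫ x in Set.Ioo a b, x⁻¹ = Real.log b - Real.log a := by
    rw [← integral_Ioc_eq_integral_Ioo, ← intervalIntegral.integral_of_le hab.le,
      integral_inv (Set.notMem_uIcc_of_lt ha hb), Real.log_div hb.ne' ha.ne']
  rw [hint, one_div]

/-- The scaling map `x ↦ x / m` is quasi measure preserving. -/
lemma hausdorff_qmp (m : ℝ) (hm : m ≠ 0) :
    Measure.QuasiMeasurePreserving (fun x : ℝ => x / m) volume volume := by
  refine ⟨measurable_id.div_const _, ?_⟩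
  have : (fun x : ℝ => x / m) = (fun x : ℝ => m⁻¹ * x) := by
    funext x; rw [div_eq_inv_mul]
  rw [this, Real.map_volume_mul_left (inv_ne_zero hm)]
  exact Measure.smul_absolutelyContinuous

end Aux

set_option maxHeartbeats 1000000 in
/-- Necessity of the condition `N_p(c,A) < ∞` in dimension one: if
`H f (x) = ∑_{k≥1} c k · f (x / k)` is bounded on `L^p(ℝ)` (with `c k ≥ 0`), then
`∑_{k≥1} c k · k^{1/p} ≤ ‖H‖`; in particular this sum is finite. -/
theorem hausdorff_condition_necessary
    (p : ℝ) (hp : 1 < p) [Fact (1 ≤ ENNReal.ofReal p)]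
    (c : ℕ → ℝ) (hc : ∀ k, 0 ≤ c k)
    (H : Lp ℂ (ENNReal.ofReal p) (volume : Measure ℝ) →L[ℂ]
        Lp ℂ (ENNReal.ofReal p) (volume : Measure ℝ))
    (hH : ∀ f : Lp ℂ (ENNReal.ofReal p) (volume : Measure ℝ),
      (H f : ℝ → ℂ) =ᵐ[volume]
        fun x => ∑' k : ℕ, (c (k + 1) : ℂ) * f (x / (k + 1))) :
    ∑' k : ℕ, ENNReal.ofReal (c (k + 1) * ((k : ℝ) + 1) ^ ((1 : ℝ) / p))
      ≤ ENNReal.ofReal ‖H‖ := by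
  have hp0 : (0:ℝ) < p := by linarith
  -- Key finite-sum estimate
  have key : ∀ K : ℕ, (∑ k ∈ Finset.range K, c (k + 1) * ((k : ℝ) + 1) ^ ((1 : ℝ) / p)) ≤ ‖H‖ := by
    intro K
    rcases Nat.eq_zero_or_pos K with hK0 | hK
    · subst hK0; simpa using norm_nonneg H
    set S : ℝ := ∑ k ∈ Finset.range K, c (k + 1) * ((k : ℝ) + 1) ^ ((1 : ℝ) / p) with hSdef
    have hS0 : 0 ≤ S := by
      apply Finset.sum_nonneg
      intro k _
      exact mul_nonneg (hc _) (Real.rpow_nonneg (by positivity) _)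
    set a : ℝ := Real.log K with hadef
    have hKR : (1:ℝ) ≤ (K:ℝ) := by exact_mod_cast hK
    have ha0 : 0 ≤ a := Real.log_nonneg hKR
    -- main estimate for each L > a
    have main : ∀ L : ℝ, a < L →
        S * (L - a) ^ ((1:ℝ)/p) ≤ ‖H‖ * L ^ ((1:ℝ)/p) := by
      intro L hL
      have hL0 : 0 < L := lt_of_le_of_lt ha0 hL
      set t : ℝ := Real.exp (-(L/2)) with htdef
      set b : ℝ := Real.exp (L/2) with hbdef
      have ht0 : 0 < t := Real.exp_pos _
      have hb0 : 0 < b := Real.exp_pos _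
      have htb : t < b := Real.exp_lt_exp.2 (by linarith)
      have hKt : (K:ℝ) * t = Real.exp (a - L/2) := by
        rw [Real.exp_sub]
        rw [Real.exp_log (by positivity : (0:ℝ) < (K:ℝ))]
        rw [htdef, Real.exp_neg]
        ring
      have hKtb : (K:ℝ) * t < b := by
        rw [hKt, hbdef]
        exact Real.exp_lt_exp.2 (by linarith)
      have hKt0 : 0 < (K:ℝ) * t := by positivity
      -- the test function
      set f : ℝ → ℂ :=
        fun x => (((Set.Ioo t b).indicator (fun y : ℝ => y ^ (-(1/p))) x : ℝ) : ℂ) with hfdef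
      have hmem : MemLp f (ENNReal.ofReal p) volume := hausdorff_memLp_phi p t b hp ht0 htb
      set F := hmem.toLp f with hFdef
      have hlogs : Real.log b - Real.log t = L := by
        rw [hbdef, htdef, Real.log_exp, Real.log_exp]; ring
      have hlogs2 : Real.log b - Real.log ((K:ℝ) * t) = L - a := by
        rw [hKt, hbdef, Real.log_exp, Real.log_exp]; ring
      have hnormF : ‖F‖ = L ^ ((1:ℝ)/p) := by
        rw [Lp.norm_toLp, hausdorff_eLpNorm_phi p t b hp ht0 htb, hlogs,
          ENNReal.toReal_ofReal (Real.rpow_nonneg hL0.le _)]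
      -- identification of H F with the explicit sum a.e.
      have hcoe : (F : ℝ → ℂ) =ᵐ[volume] f := hmem.coeFn_toLp
      have hcomp : ∀ k : ℕ, (fun x : ℝ => (F : ℝ → ℂ) (x / ((k:ℝ) + 1)))
          =ᵐ[volume] fun x : ℝ => f (x / ((k:ℝ) + 1)) := by
        intro k
        have hm : ((k:ℝ) + 1) ≠ 0 := by positivity
        exact (hausdorff_qmp ((k:ℝ) + 1) hm).ae_eq_comp hcoe
      have hae : ∀ᵐ x ∂(volume : Measure ℝ),
          (H F : ℝ → ℂ) x = ∑' k : ℕ, (c (k + 1) : ℂ) * f (x / ((k:ℝ) + 1)) := by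
        filter_upwards [hH F, ae_all_iff.2 hcomp] with x hx hx2
        rw [hx]
        exact tsum_congr fun k => by rw [hx2 k]
      -- pointwise lower bound
      set ψ : ℝ → ℂ := fun x =>
        (S : ℂ) * (((Set.Ioo ((K:ℝ) * t) b).indicator (fun y : ℝ => y ^ (-(1/p))) x : ℝ) : ℂ)
        with hψdef
      have hcore : ∀ x : ℝ, x ∈ Set.Ioo ((K:ℝ) * t) b →
          S * x ^ (-(1/p)) ≤ ‖∑' k : ℕ, (c (k + 1) : ℂ) * f (x / ((k:ℝ) + 1))‖ := by
        intro x hx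
        have hx0 : 0 < x := hKt0.trans hx.1
        set u : ℕ → ℝ := fun k =>
          c (k + 1) * (Set.Ioo t b).indicator (fun y : ℝ => y ^ (-(1/p))) (x / ((k:ℝ) + 1))
          with hudef
        have hu0 : ∀ k, 0 ≤ u k := by
          intro k
          refine mul_nonneg (hc _) ?_
          exact Set.indicator_nonneg
            (fun y hy => Real.rpow_nonneg (le_of_lt (ht0.trans hy.1)) _) _
        set N : ℕ := ⌈x / t⌉₊ with hNdef
        have hufin : ∀ k, N ≤ k → u k = 0 := by
          intro k hk
          have hxk : ¬ (t < x / ((k:ℝ) + 1)) := by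
            push_neg
            rw [div_le_iff₀ (by positivity : (0:ℝ) < (k:ℝ) + 1)]
            have h1 : x / t ≤ (N:ℝ) := Nat.le_ceil _
            have h2 : (N:ℝ) ≤ (k:ℝ) := by exact_mod_cast hk
            have h3 : x / t ≤ (k:ℝ) := h1.trans h2
            have h4 : x ≤ t * (k:ℝ) := by
              rw [div_le_iff₀ ht0] at h3
              linarith
            nlinarith
          rw [hudef]
          simp only []
          rw [Set.indicator_of_notMem (fun hmem' => hxk hmem'.1), mul_zero]
        have hsumu : Summable u :=
          summable_of_ne_finset_zero (s := Finset.range N)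
            (fun k hk => hufin k (le_of_not_gt fun h => hk (Finset.mem_range.mpr h)))
        have hceq : (fun k : ℕ => (c (k + 1) : ℂ) * f (x / ((k:ℝ) + 1)))
            = fun k : ℕ => ((u k : ℝ) : ℂ) := by
          funext k
          rw [hudef, hfdef]
          push_cast
          ring
        rw [hceq, ← Complex.ofReal_tsum, Complex.norm_real, Real.norm_eq_abs,
          abs_of_nonneg (tsum_nonneg hu0)]
        have hpart : ∑ k ∈ Finset.range K, u k ≤ ∑' k, u k :=
          Summable.sum_le_tsum (Finset.range K) (fun k _ => hu0 k) hsumu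
        have hval : ∑ k ∈ Finset.range K, u k = S * x ^ (-(1/p)) := by
          rw [hSdef, Finset.sum_mul]
          refine Finset.sum_congr rfl fun k hk => ?_
          have hkK : (k:ℝ) + 1 ≤ (K:ℝ) := by
            have := Finset.mem_range.mp hk
            exact_mod_cast this
          have hk1 : (0:ℝ) < (k:ℝ) + 1 := by positivity
          have hmem' : x / ((k:ℝ) + 1) ∈ Set.Ioo t b := by
            constructor
            · rw [lt_div_iff₀ hk1]
              nlinarith [hx.1]
            · calc x / ((k:ℝ) + 1) ≤ x := by
                    rw [div_le_iff₀ hk1]; nlinarith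
                _ < b := hx.2
          rw [hudef]
          simp only []
          rw [Set.indicator_of_mem hmem']
          rw [Real.div_rpow hx0.le hk1.le, Real.rpow_neg hk1.le, div_inv_eq_mul]
          ring
        rw [← hval]
        exact hpart
      have hpt : ∀ᵐ x ∂(volume : Measure ℝ), ‖ψ x‖ ≤ ‖(H F : ℝ → ℂ) x‖ := by
        filter_upwards [hae] with x hxe
        by_cases hx : x ∈ Set.Ioo ((K:ℝ) * t) b
        · rw [hxe, hψdef]
          simp only []
          rw [Set.indicator_of_mem hx, norm_mul, Complex.norm_real, Complex.norm_real,
            Real.norm_eq_abs, Real.norm_eq_abs, abs_of_nonneg hS0,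
            abs_of_nonneg (Real.rpow_nonneg (le_of_lt (hKt0.trans hx.1)) _)]
          exact hcore x hx
        · rw [hψdef]
          simp only []
          rw [Set.indicator_of_notMem hx]
          simp
      have h1 : eLpNorm ψ (ENNReal.ofReal p) volume
          ≤ eLpNorm (H F : ℝ → ℂ) (ENNReal.ofReal p) volume := eLpNorm_mono_ae hpt
      have h2 : eLpNorm ψ (ENNReal.ofReal p) volume
          = ENNReal.ofReal S * ENNReal.ofReal ((L - a) ^ ((1:ℝ)/p)) := by
        have hψs : ψ = (S : ℂ) • (fun x : ℝ =>
            (((Set.Ioo ((K:ℝ) * t) b).indicator (fun y : ℝ => y ^ (-(1/p))) x : ℝ) : ℂ)) := by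
          funext x
          simp [hψdef]
        rw [hψs, eLpNorm_const_smul,
          hausdorff_eLpNorm_phi p ((K:ℝ) * t) b hp hKt0 hKtb, hlogs2]
        congr 1
        rw [show ‖(S:ℂ)‖ₑ = ‖S‖ₑ from by rw [← ofReal_norm_eq_enorm, ← ofReal_norm_eq_enorm, Complex.norm_real]]
        exact Real.enorm_eq_ofReal hS0
      have h3 : eLpNorm (H F : ℝ → ℂ) (ENNReal.ofReal p) volume = ENNReal.ofReal ‖H F‖ := by
        rw [Lp.norm_def, ENNReal.ofReal_toReal (Lp.eLpNorm_ne_top _)]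
      have h4 : ‖H F‖ ≤ ‖H‖ * L ^ ((1:ℝ)/p) := by
        calc ‖H F‖ ≤ ‖H‖ * ‖F‖ := H.le_opNorm F
          _ = ‖H‖ * L ^ ((1:ℝ)/p) := by rw [hnormF]
      have h5 : ENNReal.ofReal (S * (L - a) ^ ((1:ℝ)/p))
          ≤ ENNReal.ofReal (‖H‖ * L ^ ((1:ℝ)/p)) := by
        rw [ENNReal.ofReal_mul hS0, ← h2]
        calc eLpNorm ψ (ENNReal.ofReal p) volume
            ≤ eLpNorm (H F : ℝ → ℂ) (ENNReal.ofReal p) volume := h1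
          _ = ENNReal.ofReal ‖H F‖ := h3
          _ ≤ ENNReal.ofReal (‖H‖ * L ^ ((1:ℝ)/p)) := ENNReal.ofReal_le_ofReal h4
      exact (ENNReal.ofReal_le_ofReal_iff
        (mul_nonneg (norm_nonneg H) (Real.rpow_nonneg hL0.le _))).mp h5
    -- limiting argument: let L → ∞
    have t1 : Filter.Tendsto (fun L : ℝ => L / (L - a)) Filter.atTop (nhds 1) := by
      have h2 : Filter.Tendsto (fun L : ℝ => 1 + a / (L - a)) Filter.atTop (nhds (1 + 0)) := by
        refine Filter.Tendsto.add tendsto_const_nhds ?_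
        refine Filter.Tendsto.div_atTop tendsto_const_nhds ?_
        have : Filter.Tendsto (fun L : ℝ => L + -a) Filter.atTop Filter.atTop :=
          Filter.tendsto_atTop_add_const_right _ (-a) Filter.tendsto_id
        simpa [sub_eq_add_neg] using this
      rw [add_zero] at h2
      refine h2.congr' ?_
      filter_upwards [Filter.eventually_gt_atTop a] with L hL
      have hne : L - a ≠ 0 := sub_ne_zero.mpr (ne_of_gt hL)
      field_simp
      ring
    have t2 : Filter.Tendsto (fun L : ℝ => ‖H‖ * (L / (L - a)) ^ ((1:ℝ)/p))
        Filter.atTop (nhds (‖H‖ * 1 ^ ((1:ℝ)/p))) :=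
      Filter.Tendsto.const_mul _ (t1.rpow_const (Or.inr (by positivity)))
    rw [Real.one_rpow, mul_one] at t2
    refine ge_of_tendsto t2 ?_
    filter_upwards [Filter.eventually_gt_atTop a, Filter.eventually_gt_atTop 0] with L hL hL0
    have hLa : 0 < L - a := by linarith
    have hpow : (0:ℝ) < (L - a) ^ ((1:ℝ)/p) := Real.rpow_pos_of_pos hLa _
    have := main L hL
    rw [Real.div_rpow hL0.le hLa.le, ← mul_div_assoc, le_div_iff₀ hpow]
    exact this
  -- conclude for the tsum
  rw [ENNReal.tsum_eq_iSup_sum]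
  refine iSup_le fun s => ?_
  obtain ⟨n, hn⟩ := s.exists_nat_subset_range
  calc ∑ k ∈ s, ENNReal.ofReal (c (k + 1) * ((k : ℝ) + 1) ^ ((1 : ℝ) / p))
      ≤ ∑ k ∈ Finset.range n, ENNReal.ofReal (c (k + 1) * ((k : ℝ) + 1) ^ ((1 : ℝ) / p)) :=
        Finset.sum_le_sum_of_subset hn
    _ = ENNReal.ofReal (∑ k ∈ Finset.range n, c (k + 1) * ((k : ℝ) + 1) ^ ((1 : ℝ) / p)) := by
        rw [ENNReal.ofReal_sum_of_nonneg]
        intro k _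
        exact mul_nonneg (hc _) (Real.rpow_nonneg (by positivity) _)
    _ ≤ ENNReal.ofReal ‖H‖ := ENNReal.ofReal_le_ofReal (key n)
end

section
/- Let $T$ and $(T_n)$ be bounded normal operators on a complex Hilbert space with $T_n T = T T_n$ for all $n$ and $\|T-T_n\|\to 0$. Then the spectra $\sigma(T_n)$ converge to $\sigma(T)$ in Hausdorff distance; in fact $\mathrm{dist}_H(\sigma(T),\sigma(T_n))\le\|T-T_n\|$. -/
open Metric Filter

section Aux

variable {A : Type*} [CStarAlgebra A]

lemma isStarNormal_algebraMap_sub {b : A} (hb : IsStarNormal b) (z : ℂ) :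
    IsStarNormal (algebraMap ℂ A z - b) := by
  constructor
  have h1 : star (algebraMap ℂ A z - b) = algebraMap ℂ A (starRingEnd ℂ z) - star b := by
    rw [star_sub, ← algebraMap_star_comm]
    rfl
  rw [h1]
  have c1 : Commute (algebraMap ℂ A z) (algebraMap ℂ A (starRingEnd ℂ z)) :=
    (Algebra.commutes _ _)
  have c2 : Commute (algebraMap ℂ A z) (star b) := (Algebra.commutes _ _)
  have c3 : Commute b (algebraMap ℂ A (starRingEnd ℂ z)) := (Algebra.commutes _ _).symm
  have c4 : Commute b (star b) := hb.star_comm_self.symm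
  exact ((c1.sub_right c2).sub_left (c3.sub_right c4)).symm

lemma isStarNormal_units_inv {u : Aˣ} (hu : IsStarNormal (u : A)) :
    IsStarNormal ((↑u⁻¹ : A)) := by
  constructor
  have h : Commute (u : A) ((star u : Aˣ) : A) := by
    rw [Units.coe_star]; exact hu.star_comm_self.symm
  have h2 := (h.units_inv_left).units_inv_right
  rw [Units.coe_star_inv] at h2
  exact h2.symm

/-- Key estimate: if `b` is normal and `z ∈ σ(a)`, then `dist(z, σ(b)) ≤ ‖a - b‖`. -/
lemma infDist_spectrum_le_of_mem_spectrum {a b : A} (hb : IsStarNormal b) {z : ℂ}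
    (hz : z ∈ spectrum ℂ a) :
    Metric.infDist z (spectrum ℂ b) ≤ ‖a - b‖ := by
  by_contra hlt
  push_neg at hlt
  set d : ℝ := Metric.infDist z (spectrum ℂ b) with hd
  have hd0 : 0 < d := lt_of_le_of_lt (norm_nonneg _) hlt
  -- z is in the resolvent set of b
  have hznot : z ∉ spectrum ℂ b := by
    intro hmem
    have : d = 0 := Metric.infDist_zero_of_mem hmem
    exact absurd this (ne_of_gt hd0)
  have hunit : IsUnit (algebraMap ℂ A z - b) := spectrum.notMem_iff.mp hznot
  set u : Aˣ := hunit.unit with hu_def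
  have hu_val : (u : A) = algebraMap ℂ A z - b := hunit.unit_spec
  -- u and its inverse are normal
  have hu_norm : IsStarNormal (u : A) := by
    rw [hu_val]; exact isStarNormal_algebraMap_sub hb z
  have huinv_norm : IsStarNormal ((↑u⁻¹ : A)) := isStarNormal_units_inv hu_norm
  -- every element of the spectrum of u⁻¹ has norm ≤ d⁻¹
  have hspec_bound : ∀ w ∈ spectrum ℂ ((↑u⁻¹ : A)), ‖w‖ ≤ d⁻¹ := by
    intro w hw
    have hw0 : w ≠ 0 := by
      intro h0
      rw [h0] at hw
      exact Units.zero_notMem_spectrum (R := ℂ) u⁻¹ hw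
    set r : ℂˣ := Units.mk0 w hw0 with hr
    have hiff := @spectrum.inv_mem_iff ℂ A _ _ _ r⁻¹ u
    have hwinv : (w⁻¹ : ℂ) ∈ spectrum ℂ ((u : A)) := by
      apply hiff.mpr
      simpa [hr] using hw
    rw [hu_val, ← spectrum.singleton_sub_eq] at hwinv
    obtain ⟨x, hx, μ, hμ, hxw⟩ := Set.mem_sub.mp hwinv
    rw [Set.mem_singleton_iff] at hx
    have hdist : d ≤ ‖w⁻¹‖ := by
      rw [← hxw, hx]
      have h5 : d ≤ dist z μ := Metric.infDist_le_dist_of_mem hμ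
      rwa [dist_eq_norm] at h5
    rw [norm_inv] at hdist
    rw [← inv_inv ‖w‖]
    exact inv_anti₀ hd0 hdist
  -- hence the norm of u⁻¹ is at most d⁻¹, by normality
  have hnorm_inv : ‖(↑u⁻¹ : A)‖ ≤ d⁻¹ := by
    have hsr : spectralRadius ℂ ((↑u⁻¹ : A)) ≤ ENNReal.ofReal d⁻¹ := by
      rw [spectralRadius]
      refine iSup₂_le fun k hk => ?_
      rw [← ENNReal.ofReal_coe_nnreal, coe_nnnorm]
      exact ENNReal.ofReal_le_ofReal (hspec_bound k hk)
    rw [IsStarNormal.spectralRadius_eq_nnnorm] at hsr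
    rw [← ENNReal.ofReal_coe_nnreal, coe_nnnorm] at hsr
    exact (ENNReal.ofReal_le_ofReal_iff (by positivity)).mp hsr
  -- the perturbation is small
  have hsmall : ‖(↑u⁻¹ : A) * (a - b)‖ < 1 := by
    calc ‖(↑u⁻¹ : A) * (a - b)‖ ≤ ‖(↑u⁻¹ : A)‖ * ‖a - b‖ := norm_mul_le _ _
      _ ≤ d⁻¹ * ‖a - b‖ := by
          apply mul_le_mul_of_nonneg_right hnorm_inv (norm_nonneg _)
      _ < d⁻¹ * d := by
          apply mul_lt_mul_of_pos_left hlt (by positivity)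
      _ = 1 := inv_mul_cancel₀ (ne_of_gt hd0)
  -- so z - a factors as a product of units
  have hfac : algebraMap ℂ A z - a = (u : A) * (1 - (↑u⁻¹ : A) * (a - b)) := by
    rw [mul_sub, mul_one, ← mul_assoc, Units.mul_inv, one_mul, hu_val]
    abel
  have : IsUnit (algebraMap ℂ A z - a) := by
    rw [hfac]
    exact u.isUnit.mul (Units.oneSub _ hsmall).isUnit
  exact spectrum.mem_iff.mp hz this

end Aux

/-- Kato's theorem: for commuting bounded normal operators, the Hausdorff distance of
spectra is bounded by the norm of the difference; hence spectra of commuting normal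
approximants converge in Hausdorff distance. -/
theorem spectra_converge_of_commuting_normal
    {H : Type*} [NormedAddCommGroup H] [InnerProductSpace ℂ H] [CompleteSpace H]
    (T : H →L[ℂ] H) (Tn : ℕ → H →L[ℂ] H)
    (hT : IsStarNormal T) (hTn : ∀ n, IsStarNormal (Tn n))
    (hcomm : ∀ n, Tn n * T = T * Tn n)
    (hnorm : Tendsto (fun n => ‖T - Tn n‖) atTop (nhds 0)) :
    (∀ n, Metric.hausdorffDist (spectrum ℂ T) (spectrum ℂ (Tn n)) ≤ ‖T - Tn n‖) ∧
    Tendsto (fun n => Metric.hausdorffDist (spectrum ℂ (Tn n)) (spectrum ℂ T))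
      atTop (nhds 0) := by
  have hmain : ∀ n, Metric.hausdorffDist (spectrum ℂ T) (spectrum ℂ (Tn n)) ≤ ‖T - Tn n‖ := by
    intro n
    refine Metric.hausdorffDist_le_of_infDist (norm_nonneg _) ?_ ?_
    · intro x hx
      exact infDist_spectrum_le_of_mem_spectrum (hTn n) hx
    · intro y hy
      have := infDist_spectrum_le_of_mem_spectrum (a := Tn n) (b := T) hT hy
      rwa [norm_sub_rev] at this
  refine ⟨hmain, ?_⟩
  refine squeeze_zero (fun n => Metric.hausdorffDist_nonneg) (fun n => ?_) hnorm
  rw [Metric.hausdorffDist_comm]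
  exact hmain n
end

section
/- Consider the operator $\mathcal{H}f(x)=f(x)+f(2x)$ on $L^2(\mathbb{R})$. Its spectrum is the circle $\{z\in\mathbb{C}: |z-1|=2^{-1/2}\}$; in particular, $\sigma(\mathcal{H})$ is not invariant under rotations about the origin. -/
open MeasureTheory Pointwise

open Set ENNReal ContinuousLinearMap

noncomputable section

local notation "XX" => Lp ℂ 2 (volume : Measure ℝ)
local notation "⟪" x ", " y "⟫" => @inner ℂ _ _ x y


lemma qmp_mul (a : ℝ) (ha : a ≠ 0) :
    Measure.QuasiMeasurePreserving (fun x : ℝ => a * x) volume volume := by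
  refine ⟨(measurable_const_mul a), ?_⟩
  rw [Real.map_volume_mul_left ha]
  exact Measure.absolutelyContinuous_of_le_smul le_rfl

lemma lintegral_comp_mul (a : ℝ) (ha : a ≠ 0) (F : ℝ → ℝ≥0∞) (hF : AEMeasurable F volume) :
    ∫⁻ x, F (a * x) = ENNReal.ofReal |a⁻¹| * ∫⁻ x, F x := by
  have h1 : ∫⁻ x, F (a * x) = ∫⁻ y, F y ∂(Measure.map (fun x => a * x) volume) := by
    rw [lintegral_map' ?_ (measurable_const_mul a).aemeasurable]
    rw [Real.map_volume_mul_left ha]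
    exact hF.smul_measure _
  rw [h1, Real.map_volume_mul_left ha, lintegral_smul_measure, smul_eq_mul]

lemma eLpNorm_two_eq (f : ℝ → ℂ) :
    eLpNorm f 2 volume = (∫⁻ x, (‖f x‖₊ : ℝ≥0∞) ^ 2) ^ ((1:ℝ)/2) := by
  rw [eLpNorm_eq_lintegral_rpow_enorm_toReal two_ne_zero ENNReal.ofNat_ne_top]
  norm_num [enorm_eq_nnnorm]

lemma eLpNorm_comp_mul (a : ℝ) (ha : a ≠ 0) (f : ℝ → ℂ) (hf : AEMeasurable f volume) :
    eLpNorm (fun x => f (a * x)) 2 volume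
      = ENNReal.ofReal |a⁻¹| ^ ((1:ℝ)/2) * eLpNorm f 2 volume := by
  rw [eLpNorm_two_eq, eLpNorm_two_eq,
    lintegral_comp_mul a ha (fun x => (‖f x‖₊ : ℝ≥0∞) ^ 2)
      (by exact (hf.nnnorm.coe_nnreal_ennreal.pow_const 2)),
    ENNReal.mul_rpow_of_nonneg _ _ (by norm_num)]

variable {e : ℂ} (he : e.re = -(1/2 : ℝ))

lemma meas_P : Measurable (fun x : ℝ => (x : ℂ) ^ e) :=
  Complex.measurable_ofReal.pow measurable_const

include he in
lemma lint_indicator_cpow {a b : ℝ} (ha : 0 < a) (hab : a ≤ b) :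
    ∫⁻ x, (‖(Ioc a b).indicator (fun x : ℝ => (x:ℂ) ^ e) x‖₊ : ℝ≥0∞) ^ 2
      = ENNReal.ofReal (Real.log b - Real.log a) := by
  have hmeas : MeasurableSet (Ioc a b) := measurableSet_Ioc
  have h1 : ∀ x : ℝ, (‖(Ioc a b).indicator (fun x : ℝ => (x:ℂ) ^ e) x‖₊ : ℝ≥0∞) ^ 2
      = (Ioc a b).indicator (fun x => ENNReal.ofReal x⁻¹) x := by
    intro x
    by_cases hx : x ∈ Ioc a b
    · rw [Set.indicator_of_mem hx, Set.indicator_of_mem hx]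
      have hx0 : 0 < x := lt_of_le_of_lt ha.le hx.1
      have habs : ‖(x:ℂ) ^ e‖ = x ^ e.re :=
        Complex.norm_cpow_eq_rpow_re_of_pos hx0 e
      have : (‖(x:ℂ) ^ e‖₊ : ℝ≥0∞) = ENNReal.ofReal (x ^ e.re) := by
        rw [← habs, ENNReal.ofReal, norm_toNNReal]
      rw [this, ← ENNReal.ofReal_pow (Real.rpow_nonneg hx0.le _), ← Real.rpow_natCast _ 2,
        ← Real.rpow_mul hx0.le, he]
      norm_num
      rw [Real.rpow_neg_one]
    · rw [Set.indicator_of_notMem hx, Set.indicator_of_notMem hx]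
      simp
  simp_rw [h1]
  rw [lintegral_indicator hmeas]
  have hint : IntegrableOn (fun x : ℝ => x⁻¹) (Ioc a b) volume := by
    have : IntervalIntegrable (fun x : ℝ => (id x)⁻¹) volume a b := by
      refine intervalIntegral.intervalIntegrable_inv (fun x hmem => ?_) continuousOn_id
      rw [Set.uIcc_of_le hab] at hmem
      exact (ne_of_gt (lt_of_lt_of_le ha hmem.1))
    exact ((intervalIntegrable_iff_integrableOn_Ioc_of_le hab).1 this)
  rw [← ofReal_integral_eq_lintegral_ofReal hint]
  · congr 1
    rw [← intervalIntegral.integral_of_le hab, integral_inv_of_pos ha (lt_of_lt_of_le ha hab),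
      Real.log_div (ne_of_gt (lt_of_lt_of_le ha hab)) (ne_of_gt ha)]
  · filter_upwards [self_mem_ae_restrict hmeas] with x hx
    exact inv_nonneg.2 (le_of_lt (lt_of_le_of_lt ha.le hx.1))

include he in
lemma memLp_indicator_cpow {a b : ℝ} (ha : 0 < a) (hab : a ≤ b) :
    MemLp ((Ioc a b).indicator (fun x : ℝ => (x:ℂ) ^ e)) 2 volume := by
  constructor
  · exact ((meas_P (e := e)).indicator measurableSet_Ioc).aestronglyMeasurable
  · rw [eLpNorm_two_eq, lint_indicator_cpow he ha hab]  -- from t1; inline later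
    exact ENNReal.rpow_lt_top_of_nonneg (by norm_num) ofReal_ne_top

def kap : ℝ := (2:ℝ) ^ (-(1:ℝ)/2)

lemma kap_eq : kap = (2:ℝ) ^ (-(1:ℝ)/2) := rfl

lemma kap_pos : 0 < kap := Real.rpow_pos_of_pos two_pos _

lemma kap_le_one : kap ≤ 1 :=
  Real.rpow_le_one_of_one_le_of_nonpos one_le_two (by norm_num)

lemma kap_sq : kap ^ 2 = 2⁻¹ := by
  rw [kap, ← Real.rpow_natCast ((2:ℝ) ^ (-(1:ℝ)/2)) 2, ← Real.rpow_mul two_pos.le]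
  norm_num

lemma sqrt_two_mul_kap : Real.sqrt 2 * kap = 1 := by
  rw [Real.sqrt_eq_rpow, kap, ← Real.rpow_add two_pos]
  norm_num

lemma comp_two_ae {f g : ℝ → ℂ} (h : f =ᵐ[volume] g) :
    (fun x => f (2*x)) =ᵐ[volume] (fun x => g (2*x)) := by
  have := (qmp_mul 2 two_ne_zero).ae_eq_comp h
  simpa [Function.comp_def] using this


lemma norm_dilation (f g : XX) (hg : (g : ℝ → ℂ) =ᵐ[volume] fun x => f (2*x)) :
    ‖g‖ = kap * ‖f‖ := by
  rw [Lp.norm_def, Lp.norm_def, eLpNorm_congr_ae hg,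
    eLpNorm_comp_mul 2 two_ne_zero _ (Lp.aestronglyMeasurable f).aemeasurable,
    ENNReal.toReal_mul]
  congr 1
  rw [← ENNReal.toReal_rpow, ENNReal.toReal_ofReal (by norm_num)]
  rw [show |(2:ℝ)⁻¹| = (2:ℝ)^(-1:ℝ) by rw [Real.rpow_neg_one]; norm_num,
    ← Real.rpow_mul two_pos.le, kap]
  norm_num

section Op
variable (A : XX →L[ℂ] XX) (hA : ∀ f : XX, ‖A f‖ = kap * ‖f‖)

include hA in
lemma A_inner (f g : XX) : ⟪A f, A g⟫ = (2⁻¹ : ℂ) * ⟪f, g⟫ := by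
  set L : XX →ₗᵢ[ℂ] XX :=
    { toLinearMap := (((Real.sqrt 2 : ℝ) : ℂ) • A).toLinearMap
      norm_map' := fun f => by
        simp only [ContinuousLinearMap.coe_coe, ContinuousLinearMap.smul_apply, norm_smul,
          Complex.norm_real, Real.norm_eq_abs, abs_of_nonneg (Real.sqrt_nonneg 2), hA]
        rw [← mul_assoc, sqrt_two_mul_kap, one_mul] } with hL
  have h := L.inner_map_map f g
  have hLf : ∀ h : XX, L h = ((Real.sqrt 2 : ℝ) : ℂ) • A h := fun _ => rfl
  rw [hLf, hLf, inner_smul_left, inner_smul_right] at h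
  have h2 : (starRingEnd ℂ) ((Real.sqrt 2 : ℝ) : ℂ) * (((Real.sqrt 2 : ℝ) : ℂ) * ⟪A f, A g⟫)
      = (2 : ℂ) * ⟪A f, A g⟫ := by
    rw [Complex.conj_ofReal, ← mul_assoc, ← Complex.ofReal_mul,
      Real.mul_self_sqrt two_pos.le]
    norm_num
  rw [h2] at h
  field_simp
  rw [mul_comm]
  exact h

variable (hAsurj : Function.Surjective A)

include hA in
lemma AstarA (f : XX) : adjoint A (A f) = (2⁻¹ : ℂ) • f := by
  refine ext_inner_right ℂ fun v => ?_
  rw [adjoint_inner_left, A_inner A hA, inner_smul_left]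
  norm_num [map_inv₀, map_ofNat]

include hA hAsurj in
lemma AAstar (f : XX) : A (adjoint A f) = (2⁻¹ : ℂ) • f := by
  obtain ⟨h, rfl⟩ := hAsurj f
  rw [AstarA A hA, ContinuousLinearMap.map_smul]

include hA hAsurj in
lemma Astar_norm (f : XX) : ‖adjoint A f‖ = kap * ‖f‖ := by
  have h1 : (⟪adjoint A f, adjoint A f⟫ : ℂ) = ⟪f, A (adjoint A f)⟫ :=
    adjoint_inner_left A (adjoint A f) f
  rw [AAstar A hA hAsurj, inner_smul_right, inner_self_eq_norm_sq_to_K,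
    inner_self_eq_norm_sq_to_K] at h1
  have h2 : (‖adjoint A f‖ : ℝ) ^ 2 = 2⁻¹ * ‖f‖ ^ 2 := by
    have := congrArg Complex.re h1
    simpa [← Complex.ofReal_pow, Complex.mul_re] using this
  have h3 : (kap * ‖f‖) ^ 2 = 2⁻¹ * ‖f‖ ^ 2 := by rw [mul_pow, kap_sq]
  have := h3 ▸ h2
  exact (sq_eq_sq₀ (norm_nonneg _) (mul_nonneg kap_pos.le (norm_nonneg _))).1 this
end Op

section Op
variable (A : XX →L[ℂ] XX) (hA : ∀ f : XX, (A f : ℝ → ℂ) =ᵐ[volume] fun x => f (2 * x))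

include hA in
lemma A_surj : Function.Surjective A := by
  intro g0
  have hG := Lp.aestronglyMeasurable g0
  set G := hG.mk (g0 : ℝ → ℂ) with hGdef
  have hsm : StronglyMeasurable G := hG.stronglyMeasurable_mk
  have hGG : (g0 : ℝ → ℂ) =ᵐ[volume] G := hG.ae_eq_mk
  set F : ℝ → ℂ := fun x => G (2⁻¹ * x) with hFdef
  have hFm : AEStronglyMeasurable F volume :=
    (hsm.comp_measurable (measurable_const_mul _)).aestronglyMeasurable
  have hFlp : MemLp F 2 volume := by
    refine ⟨hFm, ?_⟩
    rw [hFdef]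
    rw [eLpNorm_comp_mul 2⁻¹ (by norm_num) G hsm.measurable.aemeasurable]
    refine ENNReal.mul_lt_top ?_ ?_
    · exact ENNReal.rpow_lt_top_of_nonneg (by norm_num) ofReal_ne_top
    · rw [← eLpNorm_congr_ae hGG]
      exact Lp.eLpNorm_lt_top g0
  refine ⟨hFlp.toLp F, ?_⟩
  apply Lp.ext (p := (2:ℝ≥0∞)) (μ := (volume : Measure ℝ))
  have h1 : (A (hFlp.toLp F) : ℝ → ℂ) =ᵐ[volume] fun x => (hFlp.toLp F : ℝ → ℂ) (2 * x) :=
    hA _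
  have h2 : (fun x => (hFlp.toLp F : ℝ → ℂ) (2 * x)) =ᵐ[volume] fun x => F (2 * x) := by
    have := (qmp_mul 2 two_ne_zero).ae_eq_comp (MemLp.coeFn_toLp hFlp)
    simpa [Function.comp_def] using this
  have h3 : (fun x => F (2 * x)) = G := by
    funext x; show G (2⁻¹*(2*x)) = G x; congr 1; ring
  exact h1.trans (h2.trans (h3 ▸ hGG.symm))

end Op

lemma isUnit_of_bddBelow (T : XX →L[ℂ] XX) (c : ℝ) (hc : 0 < c)
    (h1 : ∀ f, c * ‖f‖ ≤ ‖T f‖) (h2 : ∀ f, c * ‖f‖ ≤ ‖adjoint T f‖) : IsUnit T := by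
  rw [ContinuousLinearMap.isUnit_iff_bijective]
  constructor
  · intro f g hfg
    have := h1 (f - g)
    rw [map_sub, hfg, sub_self, norm_zero] at this
    have h0 : ‖f - g‖ ≤ 0 := by
      by_contra h
      push_neg at h
      nlinarith
    rw [← sub_eq_zero]
    exact norm_le_zero_iff.1 h0
  · -- surjective
    have hanti : AntilipschitzWith (c.toNNReal)⁻¹ T := by
      apply ContinuousLinearMap.antilipschitz_of_bound
      intro x
      rw [NNReal.coe_inv, Real.coe_toNNReal _ hc.le, ← div_eq_inv_mul, le_div_iff₀' hc]
      exact h1 x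
    have hclosed : IsClosed (Set.range T) := hanti.isClosed_range T.uniformContinuous
    have hclosed' : IsClosed ((LinearMap.range (T : XX →ₗ[ℂ] XX) : Submodule ℂ XX) : Set XX) := by
      simpa [LinearMap.coe_range] using hclosed
    have horth : (LinearMap.range (T : XX →ₗ[ℂ] XX))ᗮ = ⊥ := by
      rw [Submodule.eq_bot_iff]
      intro g hg
      rw [Submodule.mem_orthogonal'] at hg
      have hTg : adjoint T g = 0 := by
        rw [← inner_self_eq_zero (𝕜 := ℂ) (x := adjoint T g)]
        rw [adjoint_inner_left]
        exact hg _ (LinearMap.mem_range_self _ _)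
      have := h2 g
      rw [hTg, norm_zero] at this
      have h0 : ‖g‖ ≤ 0 := by nlinarith [norm_nonneg g]
      exact norm_le_zero_iff.1 h0
    have htop : LinearMap.range (T : XX →ₗ[ℂ] XX) = ⊤ := by
      have := Submodule.topologicalClosure_eq_top_iff.2 horth
      rwa [IsClosed.submodule_topologicalClosure_eq hclosed'] at this
    exact LinearMap.range_eq_top.1 htop

lemma eLpNorm_indicator_cpow_eq {e : ℂ} (he : e.re = -(1/2 : ℝ)) {a b : ℝ}
    (ha : 0 < a) (hab : a ≤ b) :
    eLpNorm ((Ioc a b).indicator (fun x : ℝ => (x:ℂ) ^ e)) 2 volume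
      = ENNReal.ofReal (Real.log b - Real.log a) ^ ((1:ℝ)/2) := by
  rw [eLpNorm_two_eq, lint_indicator_cpow he ha hab]

section Op
variable (A : XX →L[ℂ] XX) (hA : ∀ f : XX, (A f : ℝ → ℂ) =ᵐ[volume] fun x => f (2 * x))

include hA in
lemma not_isUnit_of_abs_eq (μ : ℂ) (hμ : ‖μ‖ = kap) : ¬ IsUnit (A - μ • 1) := by
  set T := A - μ • 1 with hT
  intro hu
  obtain ⟨u, hu_eq⟩ := hu
  have hμ0 : μ ≠ 0 := by
    intro h; rw [h, norm_zero] at hμ; exact kap_pos.ne' hμ.symm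
  -- build exponent e
  have hL : Real.log 2 ≠ 0 := ne_of_gt (Real.log_pos one_lt_two)
  have hlog2 : Complex.log 2 = (Real.log 2 : ℂ) := by
    rw [show (2:ℂ) = ((2:ℝ):ℂ) by norm_num, ← Complex.ofReal_log two_pos.le]
  have hlog2ne : Complex.log 2 ≠ 0 := by
    rw [hlog2]; exact_mod_cast hL
  set e : ℂ := Complex.log μ / Complex.log 2 with he_def
  have h2e : (2:ℂ) ^ e = μ := by
    rw [he_def, Complex.cpow_def_of_ne_zero two_ne_zero, mul_comm, div_mul_cancel₀ _ hlog2ne]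
    exact Complex.exp_log hμ0
  have he : e.re = -(1/2 : ℝ) := by
    have h1 : e = Complex.log μ * (((Real.log 2)⁻¹ : ℝ) : ℂ) := by
      rw [he_def, hlog2, div_eq_mul_inv, Complex.ofReal_inv]
    have h2 : (Complex.log μ).re = Real.log kap := by rw [Complex.log_re, hμ]
    have h3 : Real.log kap = (-(1:ℝ)/2) * Real.log 2 := by
      rw [show kap = (2:ℝ) ^ (-(1:ℝ)/2) by rw [kap_eq], Real.log_rpow two_pos]
    rw [h1, Complex.mul_re, Complex.ofReal_re, Complex.ofReal_im, mul_zero, sub_zero, h2, h3]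
    field_simp

  set P : ℝ → ℂ := fun x => (x:ℂ) ^ e with hP
  set Q : ℝ → ℂ := fun x => μ * P x with hQdef
  have hmeasQ : Measurable Q := meas_P.const_mul μ
  set L : ℝ≥0∞ := ENNReal.ofReal (Real.log 2) ^ ((1:ℝ)/2) with hLdef
  have hLtop : L ≠ ⊤ := by
    rw [hLdef]
    exact (ENNReal.rpow_lt_top_of_nonneg (by norm_num) ofReal_ne_top).ne
  set C : ℝ := (2 * L).toReal with hC
  have key : ∀ n : ℕ, ∃ gn : XX,
      ‖gn‖ = Real.sqrt (((n:ℝ)+1) * Real.log 2) ∧ ‖T gn‖ ≤ C := by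
    intro n
    set b : ℝ := 2 ^ (n+1) with hb
    have h2n : (1:ℝ) ≤ 2 ^ n := one_le_pow₀ one_le_two
    have hbhalf : b = 2 * 2 ^ n := by rw [hb, pow_succ]; ring
    have hb1 : (1:ℝ) ≤ b := by rw [hbhalf]; nlinarith
    have h2nb : (2:ℝ) ^ n ≤ b := by rw [hbhalf]; nlinarith
    have hmem := memLp_indicator_cpow he one_pos hb1
    set Fb : ℝ → ℂ := (Ioc (1:ℝ) b).indicator P with hFb
    refine ⟨hmem.toLp Fb, ?_, ?_⟩
    · rw [Lp.norm_toLp, eLpNorm_indicator_cpow_eq he one_pos hb1]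
      rw [← ENNReal.toReal_rpow, ENNReal.toReal_ofReal ?_]
      · rw [Real.log_one, sub_zero, hb, Real.log_pow, Real.sqrt_eq_rpow]
        push_cast
        ring_nf
      · rw [Real.log_one, sub_zero]
        exact Real.log_nonneg hb1
    · -- estimate ‖T gn‖
      set gn : XX := hmem.toLp Fb with hgn
      set Q₁ : ℝ → ℂ := (Ioc (2⁻¹:ℝ) 1).indicator Q with hQ1
      set Q₂ : ℝ → ℂ := (Ioc ((2:ℝ)^n) b).indicator Q with hQ2
      -- pointwise computation
      have hcomp : ∀ x : ℝ, Fb (2*x) = (Ioc (2⁻¹:ℝ) ((2:ℝ)^n)).indicator Q x := by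
        intro x
        by_cases hx : x ∈ Ioc (2⁻¹:ℝ) ((2:ℝ)^n)
        · have hx2 : (2*x) ∈ Ioc (1:ℝ) b := by
            constructor
            · have := hx.1; rw [Set.mem_Ioc] at hx; linarith [hx.1]
            · rw [hbhalf]; rcases hx with ⟨_, hxu⟩; linarith
          rw [hFb, Set.indicator_of_mem hx2, Set.indicator_of_mem hx, hQdef]
          have hx0 : (0:ℝ) ≤ x := by rcases hx with ⟨hxl, _⟩; linarith
          show ((2*x:ℝ):ℂ) ^ e = μ * (x:ℂ) ^ e
          rw [Complex.ofReal_mul, Complex.mul_cpow_ofReal_nonneg (by norm_num) hx0,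
            show ((2:ℝ):ℂ) = (2:ℂ) by norm_num, h2e]
        · have hx2 : (2*x) ∉ Ioc (1:ℝ) b := by
            intro hmem2
            apply hx
            rcases hmem2 with ⟨hl, hu2⟩
            constructor
            · linarith
            · rw [hbhalf] at hu2; linarith
          rw [hFb, Set.indicator_of_notMem hx2, Set.indicator_of_notMem hx]
      have hsum1 : ∀ x : ℝ, (Ioc (2⁻¹:ℝ) ((2:ℝ)^n)).indicator Q x
          = (Ioc (2⁻¹:ℝ) 1).indicator Q x + (Ioc (1:ℝ) ((2:ℝ)^n)).indicator Q x := by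
        intro x
        rw [← Set.Ioc_union_Ioc_eq_Ioc (by norm_num : (2⁻¹:ℝ) ≤ 1) h2n,
          Set.indicator_union_of_disjoint (Set.Ioc_disjoint_Ioc_of_le le_rfl)]
      have hsum2 : ∀ x : ℝ, (Ioc (1:ℝ) b).indicator Q x
          = (Ioc (1:ℝ) ((2:ℝ)^n)).indicator Q x + (Ioc ((2:ℝ)^n) b).indicator Q x := by
        intro x
        rw [← Set.Ioc_union_Ioc_eq_Ioc h2n h2nb,
          Set.indicator_union_of_disjoint (Set.Ioc_disjoint_Ioc_of_le le_rfl)]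
      have hQF : ∀ x : ℝ, μ * Fb x = (Ioc (1:ℝ) b).indicator Q x := by
        intro x
        by_cases hx : x ∈ Ioc (1:ℝ) b
        · rw [hFb, Set.indicator_of_mem hx, Set.indicator_of_mem hx]
        · rw [hFb, Set.indicator_of_notMem hx, Set.indicator_of_notMem hx, mul_zero]
      have hpt : ∀ x : ℝ, Fb (2*x) - μ * Fb x = Q₁ x - Q₂ x := by
        intro x
        rw [hcomp x, hQF x, hsum1 x, hsum2 x, hQ1, hQ2]
        ring
      -- a.e. identity
      have hTapp : T gn = A gn - μ • gn := by
        rw [hT]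
        simp [ContinuousLinearMap.sub_apply, ContinuousLinearMap.smul_apply,
          ContinuousLinearMap.one_apply]
      have hc2 : (fun x => (gn : ℝ → ℂ) (2*x)) =ᵐ[volume] fun x => Fb (2*x) := by
        have := (qmp_mul 2 two_ne_zero).ae_eq_comp (MemLp.coeFn_toLp hmem)
        simpa [Function.comp_def] using this
      have hae : (T gn : ℝ → ℂ) =ᵐ[volume] fun x => Q₁ x - Q₂ x := by
        rw [hTapp]
        filter_upwards [Lp.coeFn_sub (A gn) (μ • gn), Lp.coeFn_smul μ gn, hA gn, hc2,
          MemLp.coeFn_toLp hmem] with x hx1 hx2 hx3 hx4 hx5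
        rw [hx1]
        simp only [Pi.sub_apply]
        rw [hx2, hx3, hx4]
        simp only [Pi.smul_apply, smul_eq_mul]
        rw [show (gn : ℝ → ℂ) x = Fb x from hx5]
        exact hpt x
      -- eLpNorm bounds
      have hm1 : AEStronglyMeasurable Q₁ volume :=
        (hmeasQ.indicator measurableSet_Ioc).aestronglyMeasurable
      have hm2 : AEStronglyMeasurable Q₂ volume :=
        (hmeasQ.indicator measurableSet_Ioc).aestronglyMeasurable
      have habs_le : (‖μ‖₊ : ℝ≥0∞) ≤ 1 := by
        rw [ENNReal.coe_le_one_iff]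
        have h : ‖μ‖ ≤ 1 := by rw [hμ]; exact kap_le_one
        exact_mod_cast h
      have hQ1norm : eLpNorm Q₁ 2 volume ≤ L := by
        have heq : Q₁ = μ • (Ioc (2⁻¹:ℝ) 1).indicator P := by
          funext x
          rw [hQ1, Pi.smul_apply, smul_eq_mul]
          by_cases hx : x ∈ Ioc (2⁻¹:ℝ) 1
          · rw [Set.indicator_of_mem hx, Set.indicator_of_mem hx]
          · rw [Set.indicator_of_notMem hx, Set.indicator_of_notMem hx, mul_zero]
        rw [heq, eLpNorm_const_smul,
          eLpNorm_indicator_cpow_eq he (by norm_num) (by norm_num)]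
        calc (‖μ‖₊ : ℝ≥0∞) * ENNReal.ofReal (Real.log 1 - Real.log 2⁻¹) ^ ((1:ℝ)/2)
            ≤ 1 * ENNReal.ofReal (Real.log 1 - Real.log 2⁻¹) ^ ((1:ℝ)/2) := by
              gcongr
          _ = L := by
              rw [one_mul, hLdef, Real.log_one, Real.log_inv]
              norm_num
      have hQ2norm : eLpNorm Q₂ 2 volume ≤ L := by
        have heq : Q₂ = μ • (Ioc ((2:ℝ)^n) b).indicator P := by
          funext x
          rw [hQ2, Pi.smul_apply, smul_eq_mul]
          by_cases hx : x ∈ Ioc ((2:ℝ)^n) b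
          · rw [Set.indicator_of_mem hx, Set.indicator_of_mem hx]
          · rw [Set.indicator_of_notMem hx, Set.indicator_of_notMem hx, mul_zero]
        rw [heq, eLpNorm_const_smul,
          eLpNorm_indicator_cpow_eq he (by positivity) h2nb]
        calc (‖μ‖₊ : ℝ≥0∞) * ENNReal.ofReal (Real.log b - Real.log (2^n)) ^ ((1:ℝ)/2)
            ≤ 1 * ENNReal.ofReal (Real.log b - Real.log (2^n)) ^ ((1:ℝ)/2) := by gcongr
          _ = L := by
              rw [one_mul, hLdef, hb, Real.log_pow, Real.log_pow]
              push_cast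
              ring_nf
      have hsub : eLpNorm (fun x => Q₁ x - Q₂ x) 2 volume ≤ 2 * L := by
        have := eLpNorm_sub_le (μ := volume) (p := 2) hm1 hm2 one_le_two
        calc eLpNorm (fun x => Q₁ x - Q₂ x) 2 volume = eLpNorm (Q₁ - Q₂) 2 volume := rfl
          _ ≤ eLpNorm Q₁ 2 volume + eLpNorm Q₂ 2 volume := this
          _ ≤ L + L := add_le_add hQ1norm hQ2norm
          _ = 2 * L := (two_mul L).symm
      rw [Lp.norm_def, eLpNorm_congr_ae hae, hC]
      apply ENNReal.toReal_mono
      · exact ENNReal.mul_ne_top (by norm_num) hLtop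
      · exact hsub
  -- final contradiction
  set V : XX →L[ℂ] XX := (↑u⁻¹ : XX →L[ℂ] XX) with hV
  set M : ℝ := ‖V‖ * C with hM
  have hM0 : 0 ≤ M := mul_nonneg (norm_nonneg _) ENNReal.toReal_nonneg
  have hbound : ∀ n : ℕ, Real.sqrt (((n:ℝ)+1) * Real.log 2) ≤ M := by
    intro n
    obtain ⟨gn, hgnorm, hTnorm⟩ := key n
    have hinv : V (T gn) = gn := by
      have h1 : ((↑u⁻¹ : XX →L[ℂ] XX) * (↑u : XX →L[ℂ] XX)) = 1 := u.inv_mul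
      have h2 := congrFun (congrArg (fun (B : XX →L[ℂ] XX) => (B : XX → XX)) h1) gn
      simpa [hu_eq, ContinuousLinearMap.mul_apply] using h2
    calc Real.sqrt (((n:ℝ)+1) * Real.log 2) = ‖gn‖ := hgnorm.symm
      _ = ‖V (T gn)‖ := by rw [hinv]
      _ ≤ ‖V‖ * ‖T gn‖ := V.le_opNorm _
      _ ≤ ‖V‖ * C := by gcongr
  obtain ⟨n, hn⟩ := exists_nat_gt (M^2 / Real.log 2)
  have hlogpos : 0 < Real.log 2 := Real.log_pos one_lt_two
  have h1 : M^2 < ((n:ℝ)+1) * Real.log 2 := by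
    rw [div_lt_iff₀ hlogpos] at hn
    nlinarith [hlogpos]
  have h2 : M < Real.sqrt (((n:ℝ)+1) * Real.log 2) := by
    rw [show M = Real.sqrt (M^2) from (Real.sqrt_sq hM0).symm]
    exact Real.sqrt_lt_sqrt (sq_nonneg M) h1
  exact absurd (hbound n) (not_le.2 h2)
end Op

section Op
variable (A : XX →L[ℂ] XX) (hA : ∀ f : XX, ‖A f‖ = kap * ‖f‖)
  (hAstar : ∀ f : XX, ‖adjoint A f‖ = kap * ‖f‖)

lemma lower_aux (B : XX →L[ℂ] XX) (hB : ∀ f, ‖B f‖ = kap * ‖f‖) (ν : ℂ) (f : XX) :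
    |kap - ‖ν‖| * ‖f‖ ≤ ‖B f - ν • f‖ := by
  have h1 : |‖B f‖ - ‖ν • f‖| ≤ ‖B f - ν • f‖ := abs_norm_sub_norm_le _ _
  have h2 : ‖ν • f‖ = ‖ν‖ * ‖f‖ := by
    rw [norm_smul]
  rw [hB, h2, ← sub_mul, abs_mul, abs_of_nonneg (norm_nonneg f)] at h1
  exact h1

include hA hAstar in
lemma isUnit_of_abs_ne (μ : ℂ) (hμ : ‖μ‖ ≠ kap) : IsUnit (A - μ • 1) := by
  set c : ℝ := |kap - ‖μ‖| with hc
  have hcpos : 0 < c := abs_pos.2 (sub_ne_zero.2 (Ne.symm hμ))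
  apply isUnit_of_bddBelow _ c hcpos
  · intro f
    have := lower_aux A hA μ f
    simpa [ContinuousLinearMap.sub_apply, ContinuousLinearMap.smul_apply,
      ContinuousLinearMap.one_apply] using this
  · intro f
    have hadj : adjoint (A - μ • 1) = adjoint A - (starRingEnd ℂ μ) • 1 := by
      rw [map_sub]
      congr 1
      rw [map_smulₛₗ]
      congr 1
      exact adjoint_id
    have := lower_aux (adjoint A) hAstar (starRingEnd ℂ μ) f
    rw [Complex.norm_conj] at this
    rw [hadj]
    simpa [ContinuousLinearMap.sub_apply, ContinuousLinearMap.smul_apply,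
      ContinuousLinearMap.one_apply] using this
end Op

/-- The operator `𝓗 f (x) = f(x) + f(2x)` on `L²(ℝ)` has spectrum the circle
`{z : |z - 1| = 2^{-1/2}}`; in particular its spectrum is not invariant under all
rotations about the origin. -/
theorem spectrum_of_one_plus_dilation
    (H : Lp ℂ 2 (volume : Measure ℝ) →L[ℂ] Lp ℂ 2 (volume : Measure ℝ))
    (hH : ∀ f : Lp ℂ 2 (volume : Measure ℝ),
      (H f : ℝ → ℂ) =ᵐ[volume] fun x => f x + f (2 * x)) :
    spectrum ℂ H = {z : ℂ | ‖z - 1‖ = (2 : ℝ) ^ (-(1 : ℝ) / 2)} ∧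
    ∃ ζ : ℂ, ‖ζ‖ = 1 ∧ ζ • spectrum ℂ H ≠ spectrum ℂ H := by
  set A : XX →L[ℂ] XX := H - 1 with hAdef
  have hA : ∀ f : XX, (A f : ℝ → ℂ) =ᵐ[volume] fun x => f (2 * x) := by
    intro f
    have h1 : A f = H f - f := by
      rw [hAdef]; simp [ContinuousLinearMap.sub_apply, ContinuousLinearMap.one_apply]
    rw [h1]
    filter_upwards [Lp.coeFn_sub (H f) f, hH f] with x hx1 hx2
    rw [hx1, Pi.sub_apply, hx2]
    ring
  have hAnorm : ∀ f : XX, ‖A f‖ = kap * ‖f‖ := fun f => norm_dilation f (A f) (hA f)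
  have hAstar := Astar_norm A hAnorm (A_surj A hA)
  -- membership characterization
  have hmem : ∀ z : ℂ, z ∈ spectrum ℂ H ↔ ¬ IsUnit (A - (z - 1) • 1) := by
    intro z
    rw [spectrum.mem_iff]
    have heq : algebraMap ℂ (XX →L[ℂ] XX) z - H = -(A - (z - 1) • 1) := by
      rw [Algebra.algebraMap_eq_smul_one, hAdef, sub_smul, one_smul]
      abel
    rw [heq, IsUnit.neg_iff]
  have hspec : spectrum ℂ H = {z : ℂ | ‖z - 1‖ = kap} := by
    ext z
    rw [hmem z, Set.mem_setOf_eq]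
    constructor
    · intro h
      by_contra habs
      exact h (isUnit_of_abs_ne A hAnorm hAstar _ habs)
    · intro h
      exact not_isUnit_of_abs_eq A hA _ h
  constructor
  · rw [hspec, kap_eq]
  · refine ⟨-1, by norm_num, ?_⟩
    rw [hspec]
    intro hcontra
    have h1 : (1 + kap : ℂ) ∈ {z : ℂ | ‖z - 1‖ = kap} := by
      simp only [Set.mem_setOf_eq, add_sub_cancel_left]
      rw [show ((kap:ℝ):ℂ) = Complex.ofReal kap from rfl, Complex.norm_real, Real.norm_eq_abs,
        abs_of_nonneg kap_pos.le]
    have h2 : (-1 : ℂ) • (1 + kap : ℂ) ∈ (-1 : ℂ) • {z : ℂ | ‖z - 1‖ = kap} :=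
      Set.smul_mem_smul_set h1
    rw [hcontra] at h2
    simp only [Set.mem_setOf_eq] at h2
    have h3 : (-1 : ℂ) • (1 + (kap:ℂ)) - 1 = -(2 + kap) := by simp only [smul_eq_mul]; ring
    rw [h3, norm_neg] at h2
    have h4 : ‖(2 + (kap:ℂ))‖ = 2 + kap := by
      rw [show (2:ℂ) + (kap:ℂ) = ((2 + kap : ℝ) : ℂ) by push_cast; ring, Complex.norm_real, Real.norm_eq_abs,
        abs_of_nonneg (by linarith [kap_pos])]
    rw [h4] at h2
    linarith [kap_pos]

end
end
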